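/- Let N ≥ 2, p > 2, μ > 0, and let U ∈ C³([0,1]) satisfy U'' + ((N-1)/r)U' + μ²|U|^{p-2}U = 0 on (0,1) with U'(0) = U'(1) = 0. Then ∫₀¹ r^{N-1}[ (U''(r))² - μ²(p-1)|U(r)|^{p-2}(U'(r))² ] dr = -(N-1) ∫₀¹ r^{N-3} (U'(r))² dr. -/

import Mathlib

open Real Filter

/-- The function `u ↦ |u|^(p-2) * u` has derivative `(p-1)|u|^(p-2)` when `p > 2`. -/
lemma hasDerivAt_abs_rpow_mul (p : ℝ) (hp : 2 < p) (x : ℝ) :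
    HasDerivAt (fun u : ℝ => |u| ^ (p - 2) * u) ((p - 1) * |x| ^ (p - 2)) x := by
  rcases lt_trichotomy x 0 with hx | hx | hx
  · have h2 : HasDerivAt (fun y : ℝ => y ^ (p - 2)) ((p - 2) * (-x) ^ (p - 2 - 1)) (-x) :=
      Real.hasDerivAt_rpow_const (Or.inl (by linarith))
    have h3 : HasDerivAt (fun u : ℝ => -u) (-1) x := (hasDerivAt_id x).neg
    have h1 : HasDerivAt (fun u : ℝ => (-u) ^ (p - 2)) (-((p - 2) * (-x) ^ (p - 2 - 1))) x := by
      have := h2.comp x h3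
      simpa [Function.comp_def] using this
    have h4 := h1.mul (hasDerivAt_id' (x := x))
    have heq : (fun u : ℝ => |u| ^ (p - 2) * u) =ᶠ[nhds x] (fun u : ℝ => (-u) ^ (p - 2) * u) := by
      filter_upwards [eventually_lt_nhds hx] with u hu
      rw [abs_of_neg hu]
    have h5 := h4.congr_of_eventuallyEq heq
    have hxne : (-x : ℝ) ≠ 0 := ne_of_gt (by linarith)
    have hmul : (-x : ℝ) ^ (p - 2 - 1) * (-x) = (-x) ^ (p - 2) := by
      rw [← Real.rpow_add_one hxne (p - 2 - 1)]; ring_nf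
    have hval : -((p - 2) * (-x) ^ (p - 2 - 1)) * x + (-x) ^ (p - 2) * 1
        = (p - 1) * |x| ^ (p - 2) := by
      rw [abs_of_neg hx]; linear_combination (p - 2) * hmul
    exact hval ▸ h5
  · subst hx
    have hval : (p - 1) * |(0 : ℝ)| ^ (p - 2) = 0 := by
      rw [abs_zero, Real.zero_rpow (by linarith : p - 2 ≠ 0)]; ring
    rw [hval]
    rw [hasDerivAt_iff_tendsto_slope]
    have hev : slope (fun u : ℝ => |u| ^ (p - 2) * u) 0 =ᶠ[nhdsWithin 0 {(0:ℝ)}ᶜ]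
        fun u : ℝ => |u| ^ (p - 2) := by
      filter_upwards [self_mem_nhdsWithin] with u hu
      have hu0 : u ≠ 0 := hu
      rw [slope_def_field]
      field_simp
      simp
    rw [Filter.tendsto_congr' hev]
    have hcont : ContinuousAt (fun y : ℝ => y ^ (p - 2)) 0 :=
      Real.continuousAt_rpow_const 0 (p - 2) (Or.inr (by linarith))
    have : Tendsto (fun u : ℝ => |u| ^ (p - 2)) (nhds 0) (nhds 0) := by
      have habs : Tendsto (fun u : ℝ => |u|) (nhds 0) (nhds 0) := by
        simpa using continuous_abs.tendsto (0 : ℝ)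
      have := hcont.tendsto.comp habs
      simpa [Function.comp_def, Real.zero_rpow (by linarith : p - 2 ≠ 0)] using this
    exact this.mono_left nhdsWithin_le_nhds
  · have h2 : HasDerivAt (fun y : ℝ => y ^ (p - 2)) ((p - 2) * x ^ (p - 2 - 1)) x :=
      Real.hasDerivAt_rpow_const (Or.inl (ne_of_gt hx))
    have h4 := h2.mul (hasDerivAt_id' (x := x))
    have heq : (fun u : ℝ => |u| ^ (p - 2) * u) =ᶠ[nhds x] (fun u : ℝ => u ^ (p - 2) * u) := by
      filter_upwards [eventually_gt_nhds hx] with u hu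
      rw [abs_of_pos hu]
    have h5 := h4.congr_of_eventuallyEq heq
    have hmul : (x : ℝ) ^ (p - 2 - 1) * x = x ^ (p - 2) := by
      rw [← Real.rpow_add_one (ne_of_gt hx) (p - 2 - 1)]; ring_nf
    have hval : (p - 2) * x ^ (p - 2 - 1) * x + x ^ (p - 2) * 1
        = (p - 1) * |x| ^ (p - 2) := by
      rw [abs_of_pos hx]; linear_combination (p - 2) * hmul
    exact hval ▸ h5

theorem stmt3 (N : ℕ) (hN : 2 ≤ N) (p mu : ℝ) (hp : 2 < p) (hmu : 0 < mu)
    (U : ℝ → ℝ) (hU : ContDiff ℝ 3 U)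
    (hode : ∀ r ∈ Set.Ioo (0 : ℝ) 1,
      deriv (deriv U) r + ((N : ℝ) - 1) / r * deriv U r + mu ^ 2 * |U r| ^ (p - 2) * U r = 0)
    (h0 : deriv U 0 = 0) (h1 : deriv U 1 = 0) :
    ∫ r in (0 : ℝ)..1, r ^ ((N : ℝ) - 1) *
        ((deriv (deriv U) r) ^ 2 - mu ^ 2 * (p - 1) * |U r| ^ (p - 2) * (deriv U r) ^ 2)
      = -((N : ℝ) - 1) * ∫ r in (0 : ℝ)..1, r ^ ((N : ℝ) - 3) * (deriv U r) ^ 2 := by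
  set V := deriv U with hVdef
  set W := deriv V with hWdef
  set T := deriv W with hTdef
  -- smoothness bookkeeping
  have hU3 : ContDiff ℝ ((2 : WithTop ℕ∞) + 1) U := by norm_num at hU ⊢; exact hU
  obtain ⟨hUdiff, -, hV2⟩ := contDiff_succ_iff_deriv.mp hU3
  have hV2' : ContDiff ℝ ((1 : WithTop ℕ∞) + 1) V := by norm_num at hV2 ⊢; exact hV2
  obtain ⟨hVdiff, -, hW1⟩ := contDiff_succ_iff_deriv.mp hV2'
  have hW1' : ContDiff ℝ ((0 : WithTop ℕ∞) + 1) W := by norm_num at hW1 ⊢; exact hW1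
  obtain ⟨hWdiff, -, hT0⟩ := contDiff_succ_iff_deriv.mp hW1'
  have hUd : ∀ r, HasDerivAt U (V r) r := fun r => (hUdiff r).hasDerivAt
  have hVd : ∀ r, HasDerivAt V (W r) r := fun r => (hVdiff r).hasDerivAt
  have hWd : ∀ r, HasDerivAt W (T r) r := fun r => (hWdiff r).hasDerivAt
  have hVc : Continuous V := hVdiff.continuous
  have hWc : Continuous W := hWdiff.continuous
  have hTc : Continuous T := hT0.continuous
  -- k : the natural number N - 2
  set k : ℕ := N - 2 with hkdef
  have hk : (N : ℝ) = (k : ℝ) + 2 := by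
    have : ((N - 2 : ℕ) : ℝ) = (N : ℝ) - 2 := by
      push_cast [Nat.cast_sub hN]; ring
    rw [hkdef]; rw [this]; ring
  -- differentiated ODE on (0,1)
  have hode' : ∀ r ∈ Set.Ioo (0 : ℝ) 1,
      r ^ 2 * T r + ((N : ℝ) - 1) * (r * W r) - ((N : ℝ) - 1) * V r
        + mu ^ 2 * (p - 1) * |U r| ^ (p - 2) * V r * r ^ 2 = 0 := by
    intro r hr
    have hr0 : r ≠ 0 := ne_of_gt hr.1
    set h : ℝ → ℝ := fun s => W s + ((N : ℝ) - 1) / s * V s + mu ^ 2 * (|U s| ^ (p - 2) * U s)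
      with hhdef
    have hinv : HasDerivAt (fun s : ℝ => ((N : ℝ) - 1) / s) (((N : ℝ) - 1) * (-(r ^ 2)⁻¹)) r := by
      have := (hasDerivAt_inv hr0).const_mul ((N : ℝ) - 1)
      simpa [div_eq_mul_inv] using this
    have hterm2 := hinv.mul (hVd r)
    have hterm3 : HasDerivAt (fun s => mu ^ 2 * (|U s| ^ (p - 2) * U s))
        (mu ^ 2 * ((p - 1) * |U r| ^ (p - 2) * V r)) r := by
      have hcomp := (hasDerivAt_abs_rpow_mul p hp (U r)).comp r (hUd r)
      have : HasDerivAt (fun s => |U s| ^ (p - 2) * U s) ((p - 1) * |U r| ^ (p - 2) * V r) r := by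
        simpa [Function.comp_def, mul_assoc] using hcomp
      simpa [mul_assoc] using this.const_mul (mu ^ 2)
    have hD : HasDerivAt h
        (T r + (((N : ℝ) - 1) * (-(r ^ 2)⁻¹) * V r + ((N : ℝ) - 1) / r * W r)
          + mu ^ 2 * ((p - 1) * |U r| ^ (p - 2) * V r)) r :=
      ((hWd r).add hterm2).add hterm3
    have hzero : h =ᶠ[nhds r] fun _ => 0 := by
      filter_upwards [isOpen_Ioo.mem_nhds hr] with s hs
      have := hode s hs
      rw [hhdef]; dsimp only
      linear_combination this
    have hD0 : HasDerivAt h 0 r :=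
      (hasDerivAt_const r (0 : ℝ)).congr_of_eventuallyEq hzero
    have hDeq := hD.unique hD0
    field_simp at hDeq
    have h2' : r * (r ^ 2 * T r + ((N : ℝ) - 1) * (r * W r) - ((N : ℝ) - 1) * V r
        + mu ^ 2 * (p - 1) * |U r| ^ (p - 2) * V r * r ^ 2) = 0 := by
      linear_combination r * hDeq
    rcases mul_eq_zero.mp h2' with h | h
    · exact absurd h hr0
    · exact h
  -- auxiliary continuous functions
  set ψ : ℝ → ℝ := fun r => if r = 0 then W 0 else V r / r with hψdef
  have hV0 : V 0 = 0 := h0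
  have hψcont : Continuous ψ := by
    rw [continuous_iff_continuousAt]
    intro x
    rcases eq_or_ne x 0 with rfl | hx
    · have hslope : Tendsto (slope V 0) (nhdsWithin 0 {(0:ℝ)}ᶜ) (nhds (W 0)) :=
        hasDerivAt_iff_tendsto_slope.mp (hVd 0)
      have hev : ψ =ᶠ[nhdsWithin 0 {(0:ℝ)}ᶜ] slope V 0 := by
        filter_upwards [self_mem_nhdsWithin] with u hu
        have hu0 : (u : ℝ) ≠ 0 := hu
        rw [hψdef]; dsimp only
        rw [if_neg hu0, slope_def_field, hV0, sub_zero, sub_zero]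
      have h1' : Tendsto ψ (nhdsWithin 0 {(0:ℝ)}ᶜ) (nhds (W 0)) :=
        (Filter.tendsto_congr' hev).mpr hslope
      have h2' : Tendsto ψ (pure 0) (nhds (W 0)) := by
        have hψ0 : ψ 0 = W 0 := by simp [hψdef]
        have := tendsto_pure_nhds ψ 0
        rwa [hψ0] at this
      have hsup : Tendsto ψ (nhdsWithin 0 {(0:ℝ)}ᶜ ⊔ pure 0) (nhds (W 0)) := by
        rw [Filter.tendsto_sup]
        exact ⟨h1', h2'⟩
      rw [nhdsNE_sup_pure] at hsup
      have hψ0 : ψ 0 = W 0 := by simp [hψdef]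
      unfold ContinuousAt
      rw [hψ0]
      exact hsup
    · have : ContinuousAt (fun r : ℝ => V r / r) x :=
        (hVc.continuousAt).div continuousAt_id hx
      apply this.congr
      filter_upwards [isOpen_compl_singleton.mem_nhds hx] with u hu
      have hu0 : (u : ℝ) ≠ 0 := hu
      rw [hψdef]; dsimp only; rw [if_neg hu0]
  set f : ℝ → ℝ := fun r => ((k : ℝ) + 1) * r ^ k * (V r * W r)
      + r ^ (k + 1) * (W r * W r + V r * T r) with hfdef
  set g : ℝ → ℝ := fun r => r ^ k * ψ r * V r with hgdef
  set F : ℝ → ℝ := fun r => r ^ (k + 1) * (V r * W r) with hFdef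
  have hFd : ∀ r, HasDerivAt F (f r) r := by
    intro r
    have hpow : HasDerivAt (fun x : ℝ => x ^ (k + 1)) (((k : ℝ) + 1) * r ^ k) r := by
      have := hasDerivAt_pow (k + 1) r
      simpa using this
    have := hpow.mul ((hVd r).mul (hWd r))
    simpa [hfdef, hFdef, Pi.mul_def] using this
  have hfc : Continuous f := by
    apply Continuous.add
    · exact (continuous_const.mul (continuous_pow k)).mul (hVc.mul hWc)
    · exact (continuous_pow (k + 1)).mul ((hWc.mul hWc).add (hVc.mul hTc))
  have hgc : Continuous g := ((continuous_pow k).mul hψcont).mul hVc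
  -- pointwise identities on Ioo 0 1
  have hI1 : ∀ r ∈ Set.Ioo (0 : ℝ) 1,
      r ^ ((N : ℝ) - 1) * ((W r) ^ 2 - mu ^ 2 * (p - 1) * |U r| ^ (p - 2) * (V r) ^ 2)
        = f r - ((N : ℝ) - 1) * g r := by
    intro r hr
    have hr0 : (0 : ℝ) < r := hr.1
    have hrne : r ≠ 0 := ne_of_gt hr0
    have hrpow : r ^ ((N : ℝ) - 1) = r ^ (k + 1) := by
      rw [show (N : ℝ) - 1 = ((k + 1 : ℕ) : ℝ) by push_cast [hk]; ring, Real.rpow_natCast]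
    have hψr : ψ r = V r / r := by rw [hψdef]; dsimp only; rw [if_neg hrne]
    have hkey := hode' r hr
    rw [hrpow, hfdef, hgdef]
    dsimp only
    rw [hψr, hk]
    rw [hk] at hkey
    have hrk : r ^ (k + 1) = r ^ k * r := pow_succ r k
    field_simp
    simp only [pow_succ]
    linear_combination (-(r ^ k * V r)) * hkey
  have hI2 : ∀ r ∈ Set.Ioo (0 : ℝ) 1,
      r ^ ((N : ℝ) - 3) * (V r) ^ 2 = g r := by
    intro r hr
    have hr0 : (0 : ℝ) < r := hr.1
    have hrne : r ≠ 0 := ne_of_gt hr0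
    have hψr : ψ r = V r / r := by rw [hψdef]; dsimp only; rw [if_neg hrne]
    have : r ^ ((N : ℝ) - 3) = r ^ k / r := by
      rw [show (N : ℝ) - 3 = ((k : ℕ) : ℝ) - 1 by push_cast [hk]; ring,
        Real.rpow_sub hr0, Real.rpow_natCast, Real.rpow_one]
    rw [this, hgdef]
    dsimp only
    rw [hψr]
    field_simp
  -- a.e. statements
  have hae1 : ∀ᵐ x : ℝ, x ≠ 1 := by
    rw [MeasureTheory.ae_iff]
    have : {x : ℝ | ¬x ≠ 1} = {1} := by ext x; simp
    rw [this]
    exact MeasureTheory.measure_singleton 1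
  have hmem : ∀ᵐ x : ℝ, x ∈ Set.uIoc (0 : ℝ) 1 → x ∈ Set.Ioo (0 : ℝ) 1 := by
    filter_upwards [hae1] with x hx hmem
    rw [Set.uIoc_of_le (by norm_num : (0:ℝ) ≤ 1)] at hmem
    exact ⟨hmem.1, lt_of_le_of_ne hmem.2 hx⟩
  -- integral computations
  have hL : (∫ r in (0:ℝ)..1, r ^ ((N : ℝ) - 1) *
        ((W r) ^ 2 - mu ^ 2 * (p - 1) * |U r| ^ (p - 2) * (V r) ^ 2))
      = ∫ r in (0:ℝ)..1, (f r - ((N : ℝ) - 1) * g r) := by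
    apply intervalIntegral.integral_congr_ae
    filter_upwards [hmem] with x hx hxmem
    exact hI1 x (hx hxmem)
  have hR : (∫ r in (0:ℝ)..1, r ^ ((N : ℝ) - 3) * (V r) ^ 2)
      = ∫ r in (0:ℝ)..1, g r := by
    apply intervalIntegral.integral_congr_ae
    filter_upwards [hmem] with x hx hxmem
    exact hI2 x (hx hxmem)
  have hsplit : (∫ r in (0:ℝ)..1, (f r - ((N : ℝ) - 1) * g r))
      = (∫ r in (0:ℝ)..1, f r) - ((N : ℝ) - 1) * ∫ r in (0:ℝ)..1, g r := by
    rw [intervalIntegral.integral_sub (g := fun r => ((N : ℝ) - 1) * g r) (hfc.intervalIntegrable 0 1)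
      ((continuous_const.mul hgc).intervalIntegrable 0 1),
      intervalIntegral.integral_const_mul]
  have hftc : (∫ r in (0:ℝ)..1, f r) = 0 := by
    rw [intervalIntegral.integral_eq_sub_of_hasDerivAt (fun r _ => hFd r)
      (hfc.intervalIntegrable 0 1)]
    have hV1 : V 1 = 0 := h1
    rw [hFdef]
    simp [hV1, hV0]
  rw [hL, hR, hsplit, hftc]
  ring
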